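/- arXiv:1911.03360 — 2 statements merged into one kernel-verified Lean document; each statement's English description precedes it below -/
import Mathlib

section
/- Let G = (V,E) be an undirected connected unweighted graph, S ⊆ V, u ∈ S, v ∈ V \ S a neighbor of u, and let S' = (S\{u})∪{v}. Define H⁺ = {x ∈ V : dist(S,x) < dist(S',x)} and H⁻ = {x ∈ V : dist(S,x) > dist(S',x)}. Then f(S) − f(S') = |H⁻| − |H⁺|. -/
open SimpleGraph Finset

/-- Distance from a group `S` to a vertex `x` in an unweighted graph. -/
noncomputable def setDist {V : Type*} (G : SimpleGraph V) (S : Finset V) (x : V) : ℕ :=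
  sInf {d | ∃ s ∈ S, G.dist s x = d}

/-- Farness of a group `S`. -/
noncomputable def farness {V : Type*} [Fintype V] [DecidableEq V]
    (G : SimpleGraph V) (S : Finset V) : ℕ :=
  ∑ x ∈ Sᶜ, setDist G S x

/-- Edge relation of the BFS DAG rooted at `S`. -/
def bfsEdge {V : Type*} (G : SimpleGraph V) (S : Finset V) (x y : V) : Prop :=
  G.Adj x y ∧ setDist G S y = setDist G S x + 1

/-- Vertices reachable from `v` in the BFS DAG rooted at `S` (including `v`). -/
def reach {V : Type*} (G : SimpleGraph V) (S : Finset V) (v : V) : Set V :=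
  {x | Relation.ReflTransGen (bfsEdge G S) v x}

lemma setDist_le {V : Type*} (G : SimpleGraph V) (S : Finset V) {s : V} (hs : s ∈ S) (x : V) :
    setDist G S x ≤ G.dist s x :=
  Nat.sInf_le ⟨s, hs, rfl⟩

lemma setDist_exists {V : Type*} (G : SimpleGraph V) (S : Finset V) (hS : S.Nonempty) (x : V) :
    ∃ s ∈ S, G.dist s x = setDist G S x := by
  obtain ⟨s, hs⟩ := hS
  have : setDist G S x ∈ {d | ∃ s ∈ S, G.dist s x = d} :=
    Nat.sInf_mem ⟨G.dist s x, s, hs, rfl⟩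
  exact this

lemma setDist_mem_zero {V : Type*} (G : SimpleGraph V) (S : Finset V) {x : V} (hx : x ∈ S) :
    setDist G S x = 0 :=
  Nat.le_zero.mp (by simpa [SimpleGraph.dist_self] using setDist_le G S hx x)

theorem stmt3 {V : Type*} [Fintype V] [DecidableEq V] (G : SimpleGraph V)
    (hconn : G.Connected) (S : Finset V) (hS : S.Nonempty) (u v : V)
    (hu : u ∈ S) (hv : v ∉ S) (hadj : G.Adj u v) :
    (farness G S : ℤ) - farness G (insert v (S.erase u)) =
      ({x : V | setDist G S x > setDist G (insert v (S.erase u)) x}.ncard : ℤ) -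
        ({x : V | setDist G S x < setDist G (insert v (S.erase u)) x}.ncard : ℤ) := by
  classical
  set S' : Finset V := insert v (S.erase u) with hS'def
  have hS' : S'.Nonempty := ⟨v, Finset.mem_insert_self _ _⟩
  have hduv : G.dist u v = 1 := (SimpleGraph.dist_eq_one_iff_adj).mpr hadj
  have hdvu : G.dist v u = 1 := (SimpleGraph.dist_eq_one_iff_adj).mpr hadj.symm
  -- d_{S'} x ≤ d_S x + 1
  have h1 : ∀ x, setDist G S' x ≤ setDist G S x + 1 := by
    intro x
    obtain ⟨s, hs, hsx⟩ := setDist_exists G S hS x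
    by_cases hsu : s = u
    · subst hsu
      calc setDist G S' x ≤ G.dist v x := setDist_le G S' (Finset.mem_insert_self _ _) x
        _ ≤ G.dist v s + G.dist s x := hconn.dist_triangle
        _ = setDist G S x + 1 := by rw [hdvu, hsx]; omega
    · have : s ∈ S' := Finset.mem_insert_of_mem (Finset.mem_erase.mpr ⟨hsu, hs⟩)
      calc setDist G S' x ≤ G.dist s x := setDist_le G S' this x
        _ ≤ setDist G S x + 1 := by omega
  -- d_S x ≤ d_{S'} x + 1
  have h2 : ∀ x, setDist G S x ≤ setDist G S' x + 1 := by
    intro x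
    obtain ⟨s, hs, hsx⟩ := setDist_exists G S' hS' x
    rcases Finset.mem_insert.mp hs with rfl | hs'
    · calc setDist G S x ≤ G.dist u x := setDist_le G S hu x
        _ ≤ G.dist u s + G.dist s x := hconn.dist_triangle
        _ = setDist G S' x + 1 := by rw [hduv, hsx]; omega
    · have : s ∈ S := Finset.mem_of_mem_erase hs'
      calc setDist G S x ≤ G.dist s x := setDist_le G S this x
        _ ≤ setDist G S' x + 1 := by omega
  -- farness as full sum
  have hfS : (farness G S : ℤ) = ∑ x : V, (setDist G S x : ℤ) := by
    rw [farness]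
    push_cast
    rw [← Finset.sum_compl_add_sum S (fun x => (setDist G S x : ℤ))]
    have : ∑ x ∈ S, (setDist G S x : ℤ) = 0 :=
      Finset.sum_eq_zero fun x hx => by rw [setDist_mem_zero G S hx]; norm_num
    rw [this, add_zero]
  have hfS' : (farness G S' : ℤ) = ∑ x : V, (setDist G S' x : ℤ) := by
    rw [farness]
    push_cast
    rw [← Finset.sum_compl_add_sum S' (fun x => (setDist G S' x : ℤ))]
    have : ∑ x ∈ S', (setDist G S' x : ℤ) = 0 :=
      Finset.sum_eq_zero fun x hx => by rw [setDist_mem_zero G S' hx]; norm_num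
    rw [this, add_zero]
  have hnc1 : ({x : V | setDist G S x > setDist G S' x}.ncard : ℤ) =
      ((Finset.univ.filter fun x => setDist G S' x < setDist G S x).card : ℤ) := by
    congr 1
    rw [show {x : V | setDist G S x > setDist G S' x} =
        ↑(Finset.univ.filter fun x => setDist G S' x < setDist G S x) by
      ext x; simp [gt_iff_lt]]
    exact Set.ncard_coe_finset _
  have hnc2 : ({x : V | setDist G S x < setDist G S' x}.ncard : ℤ) =
      ((Finset.univ.filter fun x => setDist G S x < setDist G S' x).card : ℤ) := by
    congr 1
    rw [show {x : V | setDist G S x < setDist G S' x} =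
        ↑(Finset.univ.filter fun x => setDist G S x < setDist G S' x) by
      ext x; simp]
    exact Set.ncard_coe_finset _
  rw [hfS, hfS', hnc1, hnc2, ← Finset.sum_sub_distrib]
  rw [← Finset.sum_boole (p := fun x => setDist G S' x < setDist G S x),
      ← Finset.sum_boole (p := fun x => setDist G S x < setDist G S' x),
      ← Finset.sum_sub_distrib]
  apply Finset.sum_congr rfl
  intro x _
  have ha := h1 x
  have hb := h2 x
  by_cases hlt : setDist G S' x < setDist G S x <;>
  by_cases hlt2 : setDist G S x < setDist G S' x <;>
  simp [hlt, hlt2] <;> omega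
end

section
/- The farness function f(S) = Σ_{x ∈ V\S} dist(S,x) on nonempty subsets of a finite connected positively weighted graph is supermodular: for all nonempty S ⊆ T ⊆ V and v ∈ V \ T, f(S) − f(S∪{v}) ≥ f(T) − f(T∪{v}). -/
open SimpleGraph Finset

/-- Total weight of a walk. -/
noncomputable def walkWeight {V : Type*} {G : SimpleGraph V} (w : V → V → ℝ) :
    {x y : V} → G.Walk x y → ℝ
  | _, _, SimpleGraph.Walk.nil => 0
  | _, _, @SimpleGraph.Walk.cons _ _ a b _ _ p => w a b + walkWeight w p

/-- Weighted shortest-path distance between two vertices. -/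
noncomputable def wdist {V : Type*} (G : SimpleGraph V) (w : V → V → ℝ) (x y : V) : ℝ :=
  sInf {r | ∃ p : G.Walk x y, walkWeight w p = r}

/-- Weighted distance from a group `S` to a vertex `x`. -/
noncomputable def wsetDist {V : Type*} (G : SimpleGraph V) (w : V → V → ℝ)
    (S : Finset V) (x : V) : ℝ :=
  sInf {r | ∃ s ∈ S, wdist G w s x = r}

/-- Weighted farness of a group `S`. -/
noncomputable def wFarness {V : Type*} [Fintype V] [DecidableEq V]
    (G : SimpleGraph V) (w : V → V → ℝ) (S : Finset V) : ℝ :=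
  ∑ x ∈ Sᶜ, wsetDist G w S x

/-- Edge relation of the weighted shortest-path DAG rooted at `S`. -/
def wdagEdge {V : Type*} (G : SimpleGraph V) (w : V → V → ℝ) (S : Finset V) (x y : V) : Prop :=
  G.Adj x y ∧ wsetDist G w S y = wsetDist G w S x + w x y

/-- Vertices reachable from `v` in the weighted shortest-path DAG rooted at `S`. -/
def wreach {V : Type*} (G : SimpleGraph V) (w : V → V → ℝ) (S : Finset V) (v : V) : Set V :=
  {x | Relation.ReflTransGen (wdagEdge G w S) v x}


section Aux

variable {V : Type*} (G : SimpleGraph V) (w : V → V → ℝ)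

lemma walkWeight_nonneg (hpos : ∀ x y, G.Adj x y → 0 < w x y) :
    ∀ {x y : V} (p : G.Walk x y), 0 ≤ walkWeight w p
  | _, _, SimpleGraph.Walk.nil => le_refl 0
  | _, _, SimpleGraph.Walk.cons h p => by
      simpa [walkWeight] using add_nonneg (hpos _ _ h).le (walkWeight_nonneg hpos p)

lemma wdist_nonneg (hconn : G.Connected) (hpos : ∀ x y, G.Adj x y → 0 < w x y)
    (x y : V) : 0 ≤ wdist G w x y := by
  obtain ⟨p⟩ := hconn x y
  exact le_csInf ⟨walkWeight w p, p, rfl⟩ (by rintro r ⟨q, rfl⟩; exact walkWeight_nonneg G w hpos q)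

lemma wsetDist_eq_min' (S : Finset V) (hS : S.Nonempty) (x : V) :
    wsetDist G w S x = (S.image (fun s => wdist G w s x)).min' (hS.image _) := by
  have hset : {r | ∃ s ∈ S, wdist G w s x = r}
      = ↑(S.image (fun s => wdist G w s x)) := by
    ext r; simp [eq_comm]
  rw [wsetDist, hset, (hS.image _).csInf_eq_min']

lemma wsetDist_nonneg (hconn : G.Connected) (hpos : ∀ x y, G.Adj x y → 0 < w x y)
    (S : Finset V) (hS : S.Nonempty) (x : V) : 0 ≤ wsetDist G w S x := by
  rw [wsetDist_eq_min' G w S hS x]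
  apply Finset.le_min'
  intro r hr
  obtain ⟨s, _, rfl⟩ := Finset.mem_image.mp hr
  exact wdist_nonneg G w hconn hpos s x

lemma wsetDist_anti {S T : Finset V} (hS : S.Nonempty) (hST : S ⊆ T) (x : V) :
    wsetDist G w T x ≤ wsetDist G w S x := by
  rw [wsetDist_eq_min' G w S hS x, wsetDist_eq_min' G w T (hS.mono hST) x]
  exact Finset.min'_subset _ (Finset.image_subset_image hST)

lemma wsetDist_insert [DecidableEq V] (S : Finset V) (hS : S.Nonempty) (v x : V) :
    wsetDist G w (insert v S) x = min (wsetDist G w S x) (wdist G w v x) := by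
  rw [wsetDist_eq_min' G w _ (S.insert_nonempty v) x, wsetDist_eq_min' G w S hS x]
  simp only [Finset.image_insert]
  exact (Finset.min'_insert _ _ _).trans (min_comm _ _)

lemma wFarness_diff [Fintype V] [DecidableEq V] (S : Finset V) (hS : S.Nonempty)
    {v : V} (hv : v ∉ S) :
    wFarness G w S - wFarness G w (insert v S)
      = wsetDist G w S v + ∑ x ∈ Sᶜ.erase v,
          (wsetDist G w S x - min (wsetDist G w S x) (wdist G w v x)) := by
  have hvS : v ∈ Sᶜ := Finset.mem_compl.mpr hv
  have h1 : wFarness G w S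
      = wsetDist G w S v + ∑ x ∈ Sᶜ.erase v, wsetDist G w S x := by
    rw [wFarness, ← Finset.add_sum_erase _ _ hvS]
  have h2 : wFarness G w (insert v S)
      = ∑ x ∈ Sᶜ.erase v, min (wsetDist G w S x) (wdist G w v x) := by
    rw [wFarness, Finset.compl_insert]
    exact Finset.sum_congr rfl fun x _ => wsetDist_insert G w S hS v x
  rw [h1, h2, Finset.sum_sub_distrib]
  ring

end Aux

theorem stmt10 {V : Type*} [Fintype V] [DecidableEq V] (G : SimpleGraph V)
    (hconn : G.Connected) (w : V → V → ℝ)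
    (hpos : ∀ x y, G.Adj x y → 0 < w x y) (hsym : ∀ x y, w x y = w y x)
    (S T : Finset V) (hS : S.Nonempty) (hST : S ⊆ T) (v : V) (hv : v ∉ T) :
    wFarness G w S - wFarness G w (insert v S) ≥
      wFarness G w T - wFarness G w (insert v T) := by
  have hvS : v ∉ S := fun h => hv (hST h)
  have hT : T.Nonempty := hS.mono hST
  rw [wFarness_diff G w S hS hvS, wFarness_diff G w T hT hv]
  have hterm : ∀ x : V,
      wsetDist G w T x - min (wsetDist G w T x) (wdist G w v x)
        ≤ wsetDist G w S x - min (wsetDist G w S x) (wdist G w v x) := by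
    intro x
    have h := wsetDist_anti G w hS hST x
    rcases le_total (wsetDist G w S x) (wdist G w v x) with hle | hle
    · rw [min_eq_left hle, min_eq_left (h.trans hle)]
      simp
    · rw [min_eq_right hle]
      rcases le_total (wsetDist G w T x) (wdist G w v x) with hle2 | hle2
      · rw [min_eq_left hle2]; simp [sub_nonneg.mpr hle]
      · rw [min_eq_right hle2]; linarith
  have hsub : Tᶜ.erase v ⊆ Sᶜ.erase v :=
    Finset.erase_subset_erase _ (Finset.compl_subset_compl.mpr hST)
  have hsum : ∑ x ∈ Tᶜ.erase v,
        (wsetDist G w T x - min (wsetDist G w T x) (wdist G w v x))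
      ≤ ∑ x ∈ Sᶜ.erase v,
        (wsetDist G w S x - min (wsetDist G w S x) (wdist G w v x)) := by
    calc ∑ x ∈ Tᶜ.erase v, (wsetDist G w T x - min (wsetDist G w T x) (wdist G w v x))
        ≤ ∑ x ∈ Tᶜ.erase v, (wsetDist G w S x - min (wsetDist G w S x) (wdist G w v x)) :=
          Finset.sum_le_sum fun x _ => hterm x
      _ ≤ ∑ x ∈ Sᶜ.erase v, (wsetDist G w S x - min (wsetDist G w S x) (wdist G w v x)) :=
          Finset.sum_le_sum_of_subset_of_nonneg hsub
            (fun x _ _ => sub_nonneg.mpr (min_le_left _ _))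
  exact add_le_add (wsetDist_anti G w hS hST v) hsum
end
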